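/- There exists a function Ã : [0,1]^d × ℝ^d → M^{d×d} that is 1-periodic in its second argument (Ã(x, λ + e_i) = Ã(x, λ) for each standard basis vector e_i) such that (D_{L,m,ν}A^ε)(x) = Ã(x, x/(mε)) for all x ∈ [0,1)^d. Moreover, for each multi-index k = (k₁,…,k_d) with 1 ≤ k_i ≤ 1/L, the restriction of Ã to T_k × ℝ^d is C¹, where T_k := ∏_{i=1}^d [(k_i−1)L, k_iL); explicitly one may take Ã(x, λ) := A(φ_{L,m,ν}(x), λ + σ_k) for x ∈ T_k, where σ_k := (1/ε)(1 − 1/m)·Φ_{L,ν}(x) is the constant value of that expression on T_k. -/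
import Mathlib


open Set

/-- (Representation of the dilated coefficient as a two-scale function.)
Let `A : [0,1]^d × ℝ^d → M^{d×d}` be `C¹` and 1-periodic in its second argument and
`A^ε(x) = A(x, x/ε)`. For the dilation operator `(D_{L,m,ν}B)(x) = B(φ_{L,m,ν}(x))`
(with `φ` the componentwise shrinkage mapping), there exists `Ã`, 1-periodic in its
second argument, with `(D_{L,m,ν}A^ε)(x) = Ã(x, x/(mε))` on `[0,1)^d`, and such that
`Ã` restricted to `T_k × ℝ^d` is `C¹` for each multi-index `k` with `1 ≤ kᵢ ≤ 1/L`,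
where `T_k = ∏ᵢ [(kᵢ−1)L, kᵢL)`. Matrices are encoded as elements of
`Fin d → Fin d → ℝ`. -/
theorem dilated_coefficient_two_scale_representation
    (d : ℕ) (L m ν ε : ℝ) (hL : 0 < L) (hLinv : ∃ n : ℕ, 0 < n ∧ (n : ℝ) * L = 1)
    (hm : 1 < m) (hν : ν ∈ Set.Icc (0:ℝ) 1) (hε : 0 < ε)
    (A : (Fin d → ℝ) × (Fin d → ℝ) → Fin d → Fin d → ℝ)
    (hA : ContDiff ℝ 1 A)
    (hAper : ∀ (x lam : Fin d → ℝ) (i : Fin d), A (x, lam + Pi.single i 1) = A (x, lam))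
    (Φ : ℝ → ℝ) (hΦ : ∀ y, Φ y = (⌊y / L⌋ + ν) * L)
    (φ : ℝ → ℝ) (hφ : ∀ y, φ y = (1 / m) * (y - Φ y) + Φ y) :
    ∃ Atil : (Fin d → ℝ) × (Fin d → ℝ) → Fin d → Fin d → ℝ,
      (∀ (x lam : Fin d → ℝ) (i : Fin d),
        Atil (x, lam + Pi.single i 1) = Atil (x, lam)) ∧
      (∀ x : Fin d → ℝ, (∀ i, x i ∈ Set.Ico (0:ℝ) 1) →
        A (fun i => φ (x i), fun i => φ (x i) / ε) = Atil (x, fun i => x i / (m * ε))) ∧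
      (∀ k : Fin d → ℤ, (∀ i, 1 ≤ k i ∧ (k i : ℝ) ≤ 1 / L) →
        ContDiffOn ℝ 1 Atil
          (({x : Fin d → ℝ | ∀ i, x i ∈ Set.Ico (((k i : ℝ) - 1) * L) ((k i : ℝ) * L)})
            ×ˢ (Set.univ : Set (Fin d → ℝ)))) := by
  have hm0 : m ≠ 0 := by linarith
  have hε0 : ε ≠ 0 := ne_of_gt hε
  refine ⟨fun p => A (fun i => φ (p.1 i), p.2 + fun i => (1/ε) * (1 - 1/m) * Φ (p.1 i)),
    ?_, ?_, ?_⟩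
  · intro x lam i
    have := hAper (fun i => φ (x i))
      (lam + fun i => (1/ε) * (1 - 1/m) * Φ (x i)) i
    simpa [add_right_comm] using this
  · intro x hx
    have harg : ((fun i => x i / (m * ε)) + fun i => (1/ε) * (1 - 1/m) * Φ (x i))
        = fun i => φ (x i) / ε := by
      funext i
      simp only [Pi.add_apply]
      rw [hφ (x i)]
      field_simp
      ring
    show A (fun i => φ (x i), fun i => φ (x i) / ε)
      = A (fun i => φ (x i),
          (fun i => x i / (m * ε)) + fun i => (1/ε) * (1 - 1/m) * Φ (x i))
    rw [harg]
  · intro k hk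
    set c : Fin d → ℝ := fun i => ((k i : ℝ) - 1 + ν) * L with hc
    have hT : ContDiff ℝ 1 (fun p : (Fin d → ℝ) × (Fin d → ℝ) =>
        ((fun i => (1/m) * (p.1 i - c i) + c i, p.2 + fun i => (1/ε) * (1 - 1/m) * c i) :
          (Fin d → ℝ) × (Fin d → ℝ))) := by
      apply ContDiff.prodMk
      · exact contDiff_pi.2 fun i => by
          have h1 : ContDiff ℝ 1 (fun p : (Fin d → ℝ) × (Fin d → ℝ) => p.1 i) :=
            contDiff_pi.1 contDiff_fst i
          exact (contDiff_const.mul (h1.sub contDiff_const)).add contDiff_const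
      · exact contDiff_snd.add contDiff_const
    refine (hA.comp hT).contDiffOn.congr ?_
    rintro ⟨x, lam⟩ ⟨hx, -⟩
    have hΦc : ∀ i, Φ (x i) = c i := by
      intro i
      have hxi := hx i
      have hfloor : ⌊x i / L⌋ = k i - 1 := by
        rw [Int.floor_eq_iff]
        constructor
        · push_cast
          rw [le_div_iff₀ hL]
          exact hxi.1
        · push_cast
          rw [div_lt_iff₀ hL]
          simpa using hxi.2
      rw [hΦ, hfloor]
      push_cast
      ring
    have h1 : (fun i => φ (x i)) = fun i => (1/m) * (x i - c i) + c i := by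
      funext i; rw [hφ (x i), hΦc i]
    have h2 : (fun i => (1/ε) * (1 - 1/m) * Φ (x i))
        = fun i => (1/ε) * (1 - 1/m) * c i := by
      funext i; rw [hΦc i]
    show A (fun i => φ (x i), lam + fun i => (1/ε) * (1 - 1/m) * Φ (x i))
      = A (fun i => (1/m) * (x i - c i) + c i, lam + fun i => (1/ε) * (1 - 1/m) * c i)
    rw [h1, h2]
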